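/- Let ω ∈ (0,1), let s ≥ 1, and let a_1,…,a_s and b_1,…,b_s be reals with a_j ≥ a_* > 0 and b_j ≥ b_* > 0 for all j. Then for every η > 0 and every ε > 0, the set {h ∈ ℤ^s : ω_h > ε²} is finite and its cardinality is at most ε^{−2η} · ∏_{j=1}^s (1 + 2 D_η ω^{η a_j}), where D_η := ∑_{h=1}^∞ ω^{η a_*(h^{b_*}−1)} (a convergent series). -/

import Mathlib

lemma stmt7_aux_summable {ω : ℝ} (hω0 : 0 < ω) (hω1 : ω < 1) {c p : ℝ} (hc : 0 < c)
    (hp : 0 < p) : Summable (fun n : ℕ => ω ^ (c * (((n : ℝ) + 1) ^ p - 1))) := by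
  have hLneg : Real.log ω < 0 := Real.log_neg hω0 hω1
  set d : ℝ := -(c * Real.log ω) with hd
  have hdpos : 0 < d := by nlinarith
  have hrw : ∀ n : ℕ, ω ^ (c * (((n : ℝ) + 1) ^ p - 1))
      = Real.exp d * Real.exp (-d * ((n : ℝ) + 1) ^ p) := by
    intro n
    rw [Real.rpow_def_of_pos hω0, ← Real.exp_add]
    ring_nf
    congr 1; rw [hd]; ring
  have hg : Summable (fun n : ℕ => Real.exp d * ((n : ℝ) + 1) ^ (-2 : ℝ)) := by
    have h1 : Summable (fun n : ℕ => ((n : ℝ)) ^ (-2 : ℝ)) :=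
      Real.summable_nat_rpow.mpr (by norm_num)
    have h2 : Summable (fun n : ℕ => (((n + 1 : ℕ) : ℝ)) ^ (-2 : ℝ)) :=
      (summable_nat_add_iff 1).mpr h1
    have h3 : Summable (fun n : ℕ => ((n : ℝ) + 1) ^ (-2 : ℝ)) := by
      convert h2 using 2 with n; push_cast; ring
    exact h3.mul_left _
  have T2 : Filter.Tendsto (fun n : ℕ => ((n : ℝ) + 1) ^ p) Filter.atTop Filter.atTop :=
    (tendsto_rpow_atTop hp).comp
      ((Filter.tendsto_atTop_add_const_right _ 1 tendsto_natCast_atTop_atTop))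
  have T : Filter.Tendsto (fun x : ℝ => x ^ (2 / p) * Real.exp (-d * x)) Filter.atTop
      (nhds 0) := tendsto_rpow_mul_exp_neg_mul_atTop_nhds_zero _ d hdpos
  have T3 := T.comp T2
  have T4 : Filter.Tendsto
      (fun n : ℕ => ((n : ℝ) + 1) ^ (2 : ℝ) * Real.exp (-d * ((n : ℝ) + 1) ^ p))
      Filter.atTop (nhds 0) := by
    convert T3 using 2 with n
    simp only [Function.comp]
    congr 1
    rw [← Real.rpow_mul (by positivity), mul_comm p (2 / p), div_mul_cancel₀ 2 hp.ne']
  have hev : ∀ᶠ n : ℕ in Filter.atTop,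
      Real.exp (-d * ((n : ℝ) + 1) ^ p) ≤ ((n : ℝ) + 1) ^ (-2 : ℝ) := by
    filter_upwards [T4.eventually_le_const one_pos] with n hn
    have hpos : (0 : ℝ) < ((n : ℝ) + 1) ^ (2 : ℝ) := by positivity
    rw [Real.rpow_neg (by positivity), inv_eq_one_div, le_div_iff₀ hpos]
    nlinarith [hn]
  apply summable_of_isBigO_nat hg
  apply Asymptotics.IsBigO.of_bound 1
  filter_upwards [hev] with n hn
  rw [hrw n]
  have h1 : (0:ℝ) ≤ ((n : ℝ) + 1) ^ (-2 : ℝ) := by positivity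
  simp only [Real.norm_eq_abs, abs_of_nonneg (mul_nonneg (Real.exp_pos d).le (Real.exp_pos _).le),
    abs_of_nonneg (mul_nonneg (Real.exp_pos d).le h1), one_mul]
  exact mul_le_mul_of_nonneg_left hn (Real.exp_pos d).le

lemma stmt7_rpow_fin_sum {ω : ℝ} (hω0 : 0 < ω) {n : ℕ} (f : Fin n → ℝ) :
    ω ^ (∑ j, f j) = ∏ j, ω ^ (f j) := by
  rw [Real.rpow_def_of_pos hω0, Finset.mul_sum, Real.exp_sum]
  exact Finset.prod_congr rfl fun j _ => (Real.rpow_def_of_pos hω0 _).symm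

/-- for ω ∈ (0,1), weights a_j ≥ a_* > 0, b_j ≥ b_* > 0, and any
η > 0, ε > 0, the series D_η = ∑_{h=1}^∞ ω^{η a_*(h^{b_*}-1)} converges, the set
{h ∈ ℤ^s : ω_h > ε²} is finite, and its cardinality is at most
ε^{-2η} ∏_{j=1}^s (1 + 2 D_η ω^{η a_j}). -/
theorem stmt7 (ω : ℝ) (hω : ω ∈ Set.Ioo (0:ℝ) 1) (s : ℕ) (hs : 1 ≤ s)
    (a b : Fin s → ℝ) (aStar bStar : ℝ) (haStar : 0 < aStar) (hbStar : 0 < bStar)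
    (ha : ∀ j, aStar ≤ a j) (hb : ∀ j, bStar ≤ b j)
    (η ε : ℝ) (hη : 0 < η) (hε : 0 < ε) :
    Summable (fun h : ℕ => ω ^ (η * aStar * (((h : ℝ) + 1) ^ bStar - 1))) ∧
    {h : Fin s → ℤ | ε ^ 2 < ω ^ (∑ j, a j * |(h j : ℝ)| ^ (b j))}.Finite ∧
    (({h : Fin s → ℤ | ε ^ 2 < ω ^ (∑ j, a j * |(h j : ℝ)| ^ (b j))}.ncard : ℝ) ≤
      ε ^ (-(2 * η)) *
        ∏ j, (1 + 2 * (∑' h : ℕ, ω ^ (η * aStar * (((h : ℝ) + 1) ^ bStar - 1))) *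
          ω ^ (η * a j))) := by
  obtain ⟨hω0, hω1⟩ := hω
  have hLneg : Real.log ω < 0 := Real.log_neg hω0 hω1
  have hD : Summable (fun h : ℕ => ω ^ (η * aStar * (((h : ℝ) + 1) ^ bStar - 1))) :=
    stmt7_aux_summable hω0 hω1 (mul_pos hη haStar) hbStar
  set D : ℝ := ∑' h : ℕ, ω ^ (η * aStar * (((h : ℝ) + 1) ^ bStar - 1)) with hDdef
  have hDnonneg : 0 ≤ D := tsum_nonneg fun n => Real.rpow_nonneg hω0.le _
  set C : ℝ := Real.log (ε ^ 2) / Real.log ω with hC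
  set K : ℝ := max 1 ((max C 0 / aStar) ^ (1 / bStar)) with hK
  obtain ⟨M, hM⟩ := exists_nat_ge K
  set S := {h : Fin s → ℤ | ε ^ 2 < ω ^ (∑ j, a j * |(h j : ℝ)| ^ (b j))} with hS
  -- coordinatewise bound for members of S
  have hbound : ∀ h ∈ S, ∀ j, |h j| ≤ (M : ℤ) := by
    intro h hh j
    have hEC : (∑ j, a j * |(h j : ℝ)| ^ (b j)) < C := by
      have h1 : Real.log (ε ^ 2) < Real.log (ω ^ (∑ j, a j * |(h j : ℝ)| ^ (b j))) :=
        Real.log_lt_log (by positivity) hh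
      rw [Real.log_rpow hω0] at h1
      rw [hC, lt_div_iff_of_neg hLneg]
      linarith [h1]
    have hterm : a j * |(h j : ℝ)| ^ (b j) ≤ ∑ j, a j * |(h j : ℝ)| ^ (b j) :=
      Finset.single_le_sum (f := fun i => a i * |(h i : ℝ)| ^ (b i))
        (fun i _ => mul_nonneg (haStar.le.trans (ha i)) (Real.rpow_nonneg (abs_nonneg _) _))
        (Finset.mem_univ j)
    have hx : |(h j : ℝ)| ^ (b j) < max C 0 / aStar := by
      rw [lt_div_iff₀ haStar]
      calc |(h j : ℝ)| ^ (b j) * aStar ≤ a j * |(h j : ℝ)| ^ (b j) := by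
            rw [mul_comm]
            exact mul_le_mul_of_nonneg_right (ha j) (by positivity)
        _ < max C 0 := lt_of_le_of_lt hterm (lt_of_lt_of_le hEC (le_max_left _ _))
    have habs : |(h j : ℝ)| ≤ (M : ℝ) := by
      rcases le_or_gt (|(h j : ℝ)|) 1 with h1 | h1
      · exact h1.trans ((le_max_left 1 _).trans hM)
      · have hb1 : |(h j : ℝ)| ^ (bStar) ≤ |(h j : ℝ)| ^ (b j) :=
          Real.rpow_le_rpow_of_exponent_le h1.le (hb j)
        have h2 : |(h j : ℝ)| ^ (bStar) < max C 0 / aStar := lt_of_le_of_lt hb1 hx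
        have h3 : (|(h j : ℝ)| ^ (bStar)) ^ (1 / bStar) ≤ (max C 0 / aStar) ^ (1 / bStar) :=
          Real.rpow_le_rpow (by positivity) h2.le (by positivity)
        rw [← Real.rpow_mul (abs_nonneg _), mul_one_div, div_self hbStar.ne',
          Real.rpow_one] at h3
        exact h3.trans ((le_max_right _ _).trans hM)
    have : ((|h j| : ℤ) : ℝ) ≤ ((M : ℤ) : ℝ) := by push_cast [Int.cast_abs]; exact habs
    exact_mod_cast this
  -- the box
  set A : Finset ℤ := (Finset.range (M + 1)).image (fun n : ℕ => (n : ℤ)) with hA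
  set B : Finset ℤ := (Finset.range (M + 1)).image (fun n : ℕ => -(n : ℤ)) with hB
  have hmem : ∀ h ∈ S, ∀ j, h j ∈ A ∪ B := by
    intro h hh j
    obtain ⟨hl, hr⟩ := abs_le.mp (hbound h hh j)
    rcases le_or_gt 0 (h j) with h0 | h0
    · exact Finset.mem_union_left _ (Finset.mem_image.mpr
        ⟨(h j).toNat, Finset.mem_range.mpr (by omega), by omega⟩)
    · exact Finset.mem_union_right _ (Finset.mem_image.mpr
        ⟨(-(h j)).toNat, Finset.mem_range.mpr (by omega), by omega⟩)
  have hfin : S.Finite := by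
    apply Set.Finite.subset ((Fintype.piFinset fun _ : Fin s => A ∪ B).finite_toSet)
    intro h hh
    simp only [Finset.coe_sort_coe, Finset.mem_coe, Fintype.mem_piFinset]
    exact hmem h hh
  refine ⟨hD, hfin, ?_⟩
  -- notation
  set g : Fin s → ℤ → ℝ := fun j x => ω ^ (η * (a j * |(x : ℝ)| ^ (b j))) with hg
  have hgnn : ∀ j x, 0 ≤ g j x := fun j x => Real.rpow_nonneg hω0.le _
  set w : Fin s → ℕ → ℝ := fun j n => ω ^ (η * (a j * ((n : ℝ)) ^ (b j))) with hw
  have hbj : ∀ j, 0 < b j := fun j => lt_of_lt_of_le hbStar (hb j)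
  have hgnat : ∀ j (n : ℕ), g j ((n : ℤ)) = w j n := by
    intro j n
    simp only [hg, hw, Int.cast_natCast, abs_of_nonneg (Nat.cast_nonneg n : (0:ℝ) ≤ n)]
  have hgneg : ∀ j (n : ℕ), g j (-(n : ℤ)) = w j n := by
    intro j n
    simp only [hg, hw, Int.cast_neg, Int.cast_natCast, abs_neg,
      abs_of_nonneg (Nat.cast_nonneg n : (0:ℝ) ≤ n)]
  have hw0 : ∀ j, w j 0 = 1 := by
    intro j
    simp [hw, Real.zero_rpow (hbj j).ne']
  -- key per-term bound
  have hkey : ∀ j (n : ℕ), w j (n + 1) ≤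
      ω ^ (η * a j) * ω ^ (η * aStar * (((n : ℝ) + 1) ^ bStar - 1)) := by
    intro j n
    rw [← Real.rpow_add hω0]
    have hcast : ((n + 1 : ℕ) : ℝ) = (n : ℝ) + 1 := by push_cast; ring
    rw [hw]
    simp only [hcast]
    apply Real.rpow_le_rpow_of_exponent_ge hω0 hω1.le
    have h1n : (1 : ℝ) ≤ (n : ℝ) + 1 := le_add_of_nonneg_left n.cast_nonneg
    have hu : 1 ≤ ((n : ℝ) + 1) ^ bStar := Real.one_le_rpow h1n hbStar.le
    have hv : ((n : ℝ) + 1) ^ bStar ≤ ((n : ℝ) + 1) ^ (b j) :=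
      Real.rpow_le_rpow_of_exponent_le h1n (hb j)
    have h1 : aStar * (((n : ℝ) + 1) ^ bStar - 1) ≤ a j * (((n : ℝ) + 1) ^ bStar - 1) :=
      mul_le_mul_of_nonneg_right (ha j) (by linarith)
    have h2 : a j * (((n : ℝ) + 1) ^ bStar) ≤ a j * (((n : ℝ) + 1) ^ (b j)) :=
      mul_le_mul_of_nonneg_left hv (haStar.le.trans (ha j))
    nlinarith [hη.le, mul_le_mul_of_nonneg_left (add_le_add h1 h2) hη.le]
  -- column sums
  have hAB : A ∩ B = {0} := by
    ext x
    simp only [Finset.mem_inter, Finset.mem_singleton, hA, hB, Finset.mem_image,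
      Finset.mem_range]
    constructor
    · rintro ⟨⟨n, hn, rfl⟩, ⟨m, hm, hmx⟩⟩; omega
    · rintro rfl; exact ⟨⟨0, by omega, rfl⟩, ⟨0, by omega, by simp⟩⟩
  have hsumA : ∀ j, ∑ x ∈ A, g j x = ∑ n ∈ Finset.range (M + 1), w j n := by
    intro j
    rw [hA, Finset.sum_image (by intro x _ y _ hxy; simpa using hxy)]
    exact Finset.sum_congr rfl fun n _ => hgnat j n
  have hsumB : ∀ j, ∑ x ∈ B, g j x = ∑ n ∈ Finset.range (M + 1), w j n := by
    intro j
    rw [hB, Finset.sum_image (by intro x _ y _ hxy; simp only at hxy; omega)]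
    exact Finset.sum_congr rfl fun n _ => hgneg j n
  have hcol : ∀ j, ∑ x ∈ A ∪ B, g j x ≤ 1 + 2 * D * ω ^ (η * a j) := by
    intro j
    have hui := Finset.sum_union_inter (s₁ := A) (s₂ := B) (f := g j)
    rw [hAB, Finset.sum_singleton] at hui
    have hg0 : g j (0 : ℤ) = 1 := by
      simpa using (hgnat j 0).trans (hw0 j)
    have hsplitr : ∑ n ∈ Finset.range (M + 1), w j n
        = ∑ n ∈ Finset.range M, w j (n + 1) + w j 0 := Finset.sum_range_succ' _ _
    have htail : ∑ n ∈ Finset.range M, w j (n + 1) ≤ ω ^ (η * a j) * D := by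
      calc ∑ n ∈ Finset.range M, w j (n + 1)
          ≤ ∑ n ∈ Finset.range M,
            ω ^ (η * a j) * ω ^ (η * aStar * (((n : ℝ) + 1) ^ bStar - 1)) :=
            Finset.sum_le_sum fun n _ => hkey j n
        _ = ω ^ (η * a j) * ∑ n ∈ Finset.range M,
            ω ^ (η * aStar * (((n : ℝ) + 1) ^ bStar - 1)) := by rw [Finset.mul_sum]
        _ ≤ ω ^ (η * a j) * D := by
            apply mul_le_mul_of_nonneg_left _ (Real.rpow_nonneg hω0.le _)
            exact Summable.sum_le_tsum (Finset.range M)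
              (fun n _ => Real.rpow_nonneg hω0.le _) hD
    have := hsumA j
    have := hsumB j
    have hwnn : (0:ℝ) ≤ ω ^ (η * a j) := Real.rpow_nonneg hω0.le _
    nlinarith [htail, hsplitr, hw0 j, hg0, hui, hsumA j, hsumB j]
  -- pointwise bound on S
  have hpt : ∀ h : Fin s → ℤ, h ∈ S →
      (1 : ℝ) ≤ ε ^ (-(2 * η)) * ω ^ (η * ∑ j, a j * |(h j : ℝ)| ^ (b j)) := by
    intro h hh
    have hh' : ε ^ 2 < ω ^ (∑ j, a j * |(h j : ℝ)| ^ (b j)) := hh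
    have hle : ε ^ (2 * η) ≤ ω ^ (η * ∑ j, a j * |(h j : ℝ)| ^ (b j)) := by
      calc ε ^ (2 * η) = (ε ^ (2 : ℝ)) ^ η := Real.rpow_mul hε.le 2 η
        _ = ((ε ^ (2 : ℕ) : ℝ)) ^ η := by
            rw [show ((2:ℝ)) = ((2:ℕ):ℝ) by norm_num, Real.rpow_natCast]
        _ ≤ (ω ^ (∑ j, a j * |(h j : ℝ)| ^ (b j))) ^ η :=
            Real.rpow_le_rpow (by positivity) hh'.le hη.le
        _ = ω ^ (η * ∑ j, a j * |(h j : ℝ)| ^ (b j)) := by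
            rw [← Real.rpow_mul hω0.le, mul_comm]
    calc (1 : ℝ) = ε ^ (-(2 * η)) * ε ^ (2 * η) := by
          rw [← Real.rpow_add hε]; norm_num
      _ ≤ _ := mul_le_mul_of_nonneg_left hle (Real.rpow_nonneg hε.le _)
  -- product decomposition
  have hsplit : ∀ h : Fin s → ℤ,
      ω ^ (η * ∑ j, a j * |(h j : ℝ)| ^ (b j)) = ∏ j, g j (h j) := by
    intro h
    rw [Finset.mul_sum, stmt7_rpow_fin_sum hω0]
  -- main chain
  set P : Finset (Fin s → ℤ) := Fintype.piFinset fun _ : Fin s => A ∪ B with hP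
  have hsub : hfin.toFinset ⊆ P := by
    intro h hh
    rw [Set.Finite.mem_toFinset] at hh
    exact Fintype.mem_piFinset.mpr (hmem h hh)
  have hcard : S.ncard = hfin.toFinset.card := Set.ncard_eq_toFinset_card S hfin
  calc (S.ncard : ℝ) = ∑ _h ∈ hfin.toFinset, (1 : ℝ) := by
        rw [Finset.sum_const, nsmul_eq_mul, mul_one, hcard]
    _ ≤ ∑ h ∈ hfin.toFinset,
        ε ^ (-(2 * η)) * ω ^ (η * ∑ j, a j * |(h j : ℝ)| ^ (b j)) :=
        Finset.sum_le_sum fun h hh => hpt h (hfin.mem_toFinset.mp hh)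
    _ ≤ ∑ h ∈ P, ε ^ (-(2 * η)) * ω ^ (η * ∑ j, a j * |(h j : ℝ)| ^ (b j)) :=
        Finset.sum_le_sum_of_subset_of_nonneg hsub fun h _ _ =>
          mul_nonneg (Real.rpow_nonneg hε.le _) (Real.rpow_nonneg hω0.le _)
    _ = ε ^ (-(2 * η)) * ∑ h ∈ P, ∏ j, g j (h j) := by
        rw [Finset.mul_sum]
        exact Finset.sum_congr rfl fun h _ => by rw [hsplit h]
    _ = ε ^ (-(2 * η)) * ∏ j, ∑ x ∈ A ∪ B, g j x := by
        rw [Finset.prod_univ_sum]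
    _ ≤ ε ^ (-(2 * η)) * ∏ j, (1 + 2 * D * ω ^ (η * a j)) := by
        apply mul_le_mul_of_nonneg_left _ (Real.rpow_nonneg hε.le _)
        exact Finset.prod_le_prod (fun j _ => Finset.sum_nonneg fun x _ => hgnn j x)
          (fun j _ => hcol j)
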